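/- arXiv:2310.17753 — 2 statements merged into one kernel-verified Lean document; each statement's English description precedes it below -/
import Mathlib

section
/- The alternating grid orientation on ℤ × ℤ is strongly connected: for every pair of vertices u and v in ℤ × ℤ, there exists a directed path from u to v, i.e., v is reachable from u under the reflexive–transitive closure of the step relation R. -/
/-- The alternating grid orientation on `ℤ × ℤ`: a horizontal move is rightward
on even rows and leftward on odd rows (`x' = x + (-1)^y`), and a vertical move
is upward on even columns and downward on odd columns (`y' = y + (-1)^x`).
Here `(-1)^n` for `n : ℤ` is computed in the unit group `ℤˣ`. -/
def altGridStep (u v : ℤ × ℤ) : Prop :=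
  (v.2 = u.2 ∧ v.1 = u.1 + (((-1 : ℤˣ) ^ u.2 : ℤˣ) : ℤ)) ∨
  (v.1 = u.1 ∧ v.2 = u.2 + (((-1 : ℤˣ) ^ u.1 : ℤˣ) : ℤ))

namespace AltGridAux

/-- The sign `(-1)^n` as an integer. -/
noncomputable def e (n : ℤ) : ℤ := (((-1 : ℤˣ) ^ n : ℤˣ) : ℤ)

lemma e_even {n : ℤ} (h : Even n) : e n = 1 := by
  rw [e, h.neg_one_zpow]; rfl

lemma e_odd {n : ℤ} (h : Odd n) : e n = -1 := by
  obtain ⟨k, rfl⟩ := h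
  rw [e, zpow_add_one, Even.neg_one_zpow ⟨k, by ring⟩]
  rfl

lemma e_odd_self (n : ℤ) : Odd (e n) := by
  rcases Int.even_or_odd n with h | h
  · rw [e_even h]; exact odd_one
  · rw [e_odd h]; decide

lemma e_succ (n : ℤ) : e (n + 1) = - e n := by
  rcases Int.even_or_odd n with h | h
  · rw [e_even h, e_odd h.add_one]
  · rw [e_odd h, e_even (h.add_odd odd_one)]
    rfl

lemma e_pred (n : ℤ) : e (n - 1) = - e n := by
  have h1 := e_succ (n - 1)
  simp only [sub_add_cancel] at h1
  omega

local notation "Reach" => Relation.ReflTransGen altGridStep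

lemma stepH (x y : ℤ) : altGridStep (x, y) (x + e y, y) := Or.inl ⟨rfl, rfl⟩

lemma stepV (x y : ℤ) : altGridStep (x, y) (x, y + e x) := Or.inr ⟨rfl, rfl⟩

lemma reach_right (x y : ℤ) : Reach (x, y) (x + 1, y) := by
  rcases Int.even_or_odd y with h | h
  · have := stepH x y
    rw [e_even h] at this
    exact Relation.ReflTransGen.single this
  · have s1 : altGridStep (x, y) (x, y + e x) := stepV x y
    have s2 : altGridStep (x, y + e x) (x + 1, y + e x) := by
      have h1 : e (y + e x) = 1 := e_even (h.add_odd (e_odd_self x))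
      have := stepH x (y + e x)
      rwa [h1] at this
    have s3 : altGridStep (x + 1, y + e x) (x + 1, y) := by
      have := stepV (x + 1) (y + e x)
      rw [e_succ x, add_neg_cancel_right] at this
      exact this
    exact ((Relation.ReflTransGen.single s1).tail s2).tail s3

lemma reach_left (x y : ℤ) : Reach (x, y) (x - 1, y) := by
  rcases Int.even_or_odd y with h | h
  · have s1 : altGridStep (x, y) (x, y + e x) := stepV x y
    have s2 : altGridStep (x, y + e x) (x - 1, y + e x) := by
      have h1 : e (y + e x) = -1 := e_odd (h.add_odd (e_odd_self x))
      have := stepH x (y + e x)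
      rw [h1] at this
      rwa [show x + -1 = x - 1 by ring] at this
    have s3 : altGridStep (x - 1, y + e x) (x - 1, y) := by
      have := stepV (x - 1) (y + e x)
      rw [e_pred x, add_neg_cancel_right] at this
      exact this
    exact ((Relation.ReflTransGen.single s1).tail s2).tail s3
  · have := stepH x y
    rw [e_odd h, show x + -1 = x - 1 by ring] at this
    exact Relation.ReflTransGen.single this

lemma reach_up (x y : ℤ) : Reach (x, y) (x, y + 1) := by
  rcases Int.even_or_odd x with h | h
  · have := stepV x y
    rw [e_even h] at this
    exact Relation.ReflTransGen.single this
  · have s1 : altGridStep (x, y) (x + e y, y) := stepH x y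
    have s2 : altGridStep (x + e y, y) (x + e y, y + 1) := by
      have h1 : e (x + e y) = 1 := e_even (h.add_odd (e_odd_self y))
      have := stepV (x + e y) y
      rwa [h1] at this
    have s3 : altGridStep (x + e y, y + 1) (x, y + 1) := by
      have := stepH (x + e y) (y + 1)
      rw [e_succ y, add_neg_cancel_right] at this
      exact this
    exact ((Relation.ReflTransGen.single s1).tail s2).tail s3

lemma reach_down (x y : ℤ) : Reach (x, y) (x, y - 1) := by
  rcases Int.even_or_odd x with h | h
  · have s1 : altGridStep (x, y) (x + e y, y) := stepH x y
    have s2 : altGridStep (x + e y, y) (x + e y, y - 1) := by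
      have h1 : e (x + e y) = -1 := e_odd (h.add_odd (e_odd_self y))
      have := stepV (x + e y) y
      rw [h1] at this
      rwa [show y + -1 = y - 1 by ring] at this
    have s3 : altGridStep (x + e y, y - 1) (x, y - 1) := by
      have := stepH (x + e y) (y - 1)
      rw [e_pred y, add_neg_cancel_right] at this
      exact this
    exact ((Relation.ReflTransGen.single s1).tail s2).tail s3
  · have := stepV x y
    rw [e_odd h, show y + -1 = y - 1 by ring] at this
    exact Relation.ReflTransGen.single this

lemma reach_horiz (x y n : ℤ) : Reach (x, y) (x + n, y) := by
  induction n using Int.induction_on with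
  | zero => simpa using Relation.ReflTransGen.refl
  | succ k ih =>
      have h : (x + k + 1 : ℤ) = x + (k + 1) := by ring
      exact h ▸ ih.trans (reach_right (x + k) y)
  | pred k ih =>
      have h : (x + -k - 1 : ℤ) = x + (-k - 1) := by ring
      exact h ▸ ih.trans (reach_left (x + -k) y)

lemma reach_vert (x y n : ℤ) : Reach (x, y) (x, y + n) := by
  induction n using Int.induction_on with
  | zero => simpa using Relation.ReflTransGen.refl
  | succ k ih =>
      have h : (y + k + 1 : ℤ) = y + (k + 1) := by ring
      exact h ▸ ih.trans (reach_up x (y + k))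
  | pred k ih =>
      have h : (y + -k - 1 : ℤ) = y + (-k - 1) := by ring
      exact h ▸ ih.trans (reach_down x (y + -k))

end AltGridAux

/-- The alternating grid orientation is strongly connected: every vertex is
reachable from every vertex via directed edges. -/
theorem altGrid_strongly_connected (u v : ℤ × ℤ) :
    Relation.ReflTransGen altGridStep u v := by
  obtain ⟨a, b⟩ := u
  obtain ⟨c, d⟩ := v
  have h1 := AltGridAux.reach_horiz a b (c - a)
  have h2 := AltGridAux.reach_vert c b (d - b)
  simp only [add_sub_cancel] at h1 h2
  exact h1.trans h2
end

section
/- For any two vertices u = (x₁,y₁) and v = (x₂,y₂) of ℤ × ℤ, there exists a directed path from u to v under the alternating grid orientation whose length is at most |x₂ - x₁| + |y₂ - y₁| + 5. In other words, the shortest directed distance exceeds the undirected (Manhattan) shortest distance by at most 5. -/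
/-- The alternating grid orientation on `ℤ × ℤ`. -/

def iabs (n : ℤ) : ℤ := if 0 ≤ n then n else -n

def sgn2 (n : ℤ) : ℤ := if n % 2 = 0 then 1 else -1

def ov00 (a b : ℤ) : ℤ :=
  if 0 ≤ a then
    if 0 < b then (if a % 2 = 1 ∧ b % 2 = 1 then 2 else 0)
    else if b = 0 then 0
    else if a = 0 then (if b % 2 = 1 then 2 else 4)
    else (if a % 2 = 0 ∧ b % 2 = 1 then 2 else 0)
  else
    if 0 < b then (if a % 2 = 1 ∧ b % 2 = 0 then 2 else 0)
    else if b = 0 then (if a % 2 = 1 then 2 else 4)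
    else if b % 2 = 1 then 2
    else if a % 2 = 1 then 2 else 4

lemma ov00_nonneg (a b : ℤ) : 0 ≤ ov00 a b := by
  unfold ov00; split_ifs <;> omega

lemma ov00_le4 (a b : ℤ) : ov00 a b ≤ 4 := by
  unfold ov00; split_ifs <;> omega

lemma iabs_nonneg (n : ℤ) : 0 ≤ iabs n := by unfold iabs; split_ifs <;> omega

lemma iabs_neg (n : ℤ) : iabs (-n) = iabs n := by unfold iabs; split_ifs <;> omega

lemma iabs_eq_zero {n : ℤ} (h : iabs n ≤ 0) : n = 0 := by
  unfold iabs at h; split_ifs at h <;> omega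

lemma sgn2_cases (n : ℤ) : sgn2 n = 1 ∨ sgn2 n = -1 := by
  unfold sgn2; split_ifs <;> simp

lemma sgn2_succ (n : ℤ) : sgn2 (n + 1) = -sgn2 n := by
  unfold sgn2; split_ifs <;> omega

lemma sgn2_pred (n : ℤ) : sgn2 (n - 1) = -sgn2 n := by
  unfold sgn2; split_ifs <;> omega

lemma ovPP {a b : ℤ} (ha : 0 ≤ a) (hb : 0 < b) :
    ov00 a b = if a % 2 = 1 ∧ b % 2 = 1 then 2 else 0 := by
  unfold ov00; split_ifs <;> omega

lemma ovP0 {a b : ℤ} (ha : 0 ≤ a) (hb : b = 0) : ov00 a b = 0 := by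
  unfold ov00; split_ifs <;> omega

lemma ovPN {a b : ℤ} (ha : 0 < a) (hb : b < 0) :
    ov00 a b = if a % 2 = 0 ∧ b % 2 = 1 then 2 else 0 := by
  unfold ov00; split_ifs <;> omega

lemma ov0N {a b : ℤ} (ha : a = 0) (hb : b < 0) :
    ov00 a b = if b % 2 = 1 then 2 else 4 := by
  unfold ov00; split_ifs <;> omega

lemma ovNP {a b : ℤ} (ha : a < 0) (hb : 0 < b) :
    ov00 a b = if a % 2 = 1 ∧ b % 2 = 0 then 2 else 0 := by
  unfold ov00; split_ifs <;> omega

lemma ovN0 {a b : ℤ} (ha : a < 0) (hb : b = 0) :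
    ov00 a b = if a % 2 = 1 then 2 else 4 := by
  unfold ov00; split_ifs <;> omega

lemma ovNN {a b : ℤ} (ha : a < 0) (hb : b < 0) :
    ov00 a b = if b % 2 = 1 then 2 else if a % 2 = 1 then 2 else 4 := by
  unfold ov00; split_ifs <;> omega

set_option maxHeartbeats 3000000 in
lemma key (A B : ℤ) (h : A ≠ 0 ∨ B ≠ 0) :
    iabs (A - 1) + iabs B + ov00 (A - 1) (-B) + 1 ≤ iabs A + iabs B + ov00 A B ∨
    iabs A + iabs (B - 1) + ov00 (-A) (B - 1) + 1 ≤ iabs A + iabs B + ov00 A B := by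
  rcases (by omega : A < 0 ∨ A = 0 ∨ A = 1 ∨ 1 < A) with hA | hA | hA | hA <;>
      rcases (by omega : B < 0 ∨ B = 0 ∨ B = 1 ∨ 1 < B) with hB | hB | hB | hB
  · rw [ovNP (a := A - 1) (b := -B) (by omega) (by omega),
        ovPN (a := -A) (b := B - 1) (by omega) (by omega),
        ovNN (a := A) (b := B) (by omega) (by omega)]
    unfold iabs; split_ifs <;> omega
  · rw [ovN0 (a := A - 1) (b := -B) (by omega) (by omega),
        ovPN (a := -A) (b := B - 1) (by omega) (by omega),
        ovN0 (a := A) (b := B) (by omega) (by omega)]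
    unfold iabs; split_ifs <;> omega
  · rw [ovNN (a := A - 1) (b := -B) (by omega) (by omega),
        ovP0 (a := -A) (b := B - 1) (by omega) (by omega),
        ovNP (a := A) (b := B) (by omega) (by omega)]
    unfold iabs; split_ifs <;> omega
  · rw [ovNN (a := A - 1) (b := -B) (by omega) (by omega),
        ovPP (a := -A) (b := B - 1) (by omega) (by omega),
        ovNP (a := A) (b := B) (by omega) (by omega)]
    unfold iabs; split_ifs <;> omega
  · rw [ovNP (a := A - 1) (b := -B) (by omega) (by omega),
        ov0N (a := -A) (b := B - 1) (by omega) (by omega),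
        ov0N (a := A) (b := B) (by omega) (by omega)]
    unfold iabs; split_ifs <;> omega
  · rcases h with h | h <;> omega
  · rw [ovNN (a := A - 1) (b := -B) (by omega) (by omega),
        ovP0 (a := -A) (b := B - 1) (by omega) (by omega),
        ovPP (a := A) (b := B) (by omega) (by omega)]
    unfold iabs; split_ifs <;> omega
  · rw [ovNN (a := A - 1) (b := -B) (by omega) (by omega),
        ovPP (a := -A) (b := B - 1) (by omega) (by omega),
        ovPP (a := A) (b := B) (by omega) (by omega)]
    unfold iabs; split_ifs <;> omega
  · rw [ovPP (a := A - 1) (b := -B) (by omega) (by omega),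
        ovNN (a := -A) (b := B - 1) (by omega) (by omega),
        ovPN (a := A) (b := B) (by omega) (by omega)]
    unfold iabs; split_ifs <;> omega
  · rw [ovP0 (a := A - 1) (b := -B) (by omega) (by omega),
        ovNN (a := -A) (b := B - 1) (by omega) (by omega),
        ovP0 (a := A) (b := B) (by omega) (by omega)]
    unfold iabs; split_ifs <;> omega
  · rw [ov0N (a := A - 1) (b := -B) (by omega) (by omega),
        ovN0 (a := -A) (b := B - 1) (by omega) (by omega),
        ovPP (a := A) (b := B) (by omega) (by omega)]
    unfold iabs; split_ifs <;> omega
  · rw [ov0N (a := A - 1) (b := -B) (by omega) (by omega),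
        ovNP (a := -A) (b := B - 1) (by omega) (by omega),
        ovPP (a := A) (b := B) (by omega) (by omega)]
    unfold iabs; split_ifs <;> omega
  · rw [ovPP (a := A - 1) (b := -B) (by omega) (by omega),
        ovNN (a := -A) (b := B - 1) (by omega) (by omega),
        ovPN (a := A) (b := B) (by omega) (by omega)]
    unfold iabs; split_ifs <;> omega
  · rw [ovP0 (a := A - 1) (b := -B) (by omega) (by omega),
        ovNN (a := -A) (b := B - 1) (by omega) (by omega),
        ovP0 (a := A) (b := B) (by omega) (by omega)]
    unfold iabs; split_ifs <;> omega
  · rw [ovPN (a := A - 1) (b := -B) (by omega) (by omega),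
        ovN0 (a := -A) (b := B - 1) (by omega) (by omega),
        ovPP (a := A) (b := B) (by omega) (by omega)]
    unfold iabs; split_ifs <;> omega
  · rw [ovPN (a := A - 1) (b := -B) (by omega) (by omega),
        ovNP (a := -A) (b := B - 1) (by omega) (by omega),
        ovPP (a := A) (b := B) (by omega) (by omega)]
    unfold iabs; split_ifs <;> omega

lemma iabs_sub_comm (a b : ℤ) : iabs (a - b) = iabs (b - a) := by
  unfold iabs; split_ifs <;> omega

lemma unit_val (m : ℤ) : (((-1 : ℤˣ) ^ m : ℤˣ) : ℤ) = sgn2 m := by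
  rcases Int.even_or_odd m with ⟨k, hk⟩ | ⟨k, hk⟩
  · subst hk
    rw [zpow_add, Int.units_mul_self]
    have h2 : (k + k) % 2 = 0 := by omega
    simp [sgn2, h2]
  · subst hk
    have h1 : (2 : ℤ) * k + 1 = k + k + 1 := by ring
    rw [h1, zpow_add, zpow_add, Int.units_mul_self, one_mul, zpow_one]
    have h2 : (k + k + 1) % 2 ≠ 0 := by omega
    simp [sgn2, h2]

def Dd (u v : ℤ × ℤ) : ℤ :=
  iabs (v.1 - u.1) + iabs (v.2 - u.2) +
    ov00 (sgn2 u.2 * (v.1 - u.1)) (sgn2 u.1 * (v.2 - u.2))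

lemma Dd_nonneg (u v : ℤ × ℤ) : 0 ≤ Dd u v := by
  have := iabs_nonneg (v.1 - u.1)
  have := iabs_nonneg (v.2 - u.2)
  have := ov00_nonneg (sgn2 u.2 * (v.1 - u.1)) (sgn2 u.1 * (v.2 - u.2))
  unfold Dd; omega

lemma Dd_eq_zero {u v : ℤ × ℤ} (h : Dd u v ≤ 0) : u = v := by
  have h1 := iabs_nonneg (v.1 - u.1)
  have h2 := iabs_nonneg (v.2 - u.2)
  have h3 := ov00_nonneg (sgn2 u.2 * (v.1 - u.1)) (sgn2 u.1 * (v.2 - u.2))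
  unfold Dd at h
  have e1 : v.1 - u.1 = 0 := iabs_eq_zero (by omega)
  have e2 : v.2 - u.2 = 0 := iabs_eq_zero (by omega)
  have : u.1 = v.1 := by omega
  have : u.2 = v.2 := by omega
  exact Prod.ext (by omega) (by omega)

lemma descent (u v : ℤ × ℤ) (h : u ≠ v) :
    ∃ u', altGridStep u u' ∧ Dd u' v + 1 ≤ Dd u v := by
  obtain ⟨x, y⟩ := u
  obtain ⟨p, q⟩ := v
  have hab : p - x ≠ 0 ∨ q - y ≠ 0 := by
    by_contra hc
    push_neg at hc
    exact h (by simp [Prod.ext_iff]; omega)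
  rcases sgn2_cases y with hy | hy <;> rcases sgn2_cases x with hx | hx
  · -- sgn2 y = 1, sgn2 x = 1 : A = p - x, B = q - y
    have hab' : p - x ≠ 0 ∨ q - y ≠ 0 := hab
    have e0 : Dd (x, y) (p, q) = iabs (p - x) + iabs (q - y) + ov00 (p - x) (q - y) := by
      simp only [Dd]; rw [hy, hx, one_mul, one_mul]
    rcases key (p - x) (q - y) hab' with hk | hk
    · refine ⟨(x + 1, y), Or.inl ⟨rfl, by rw [unit_val, hy]⟩, ?_⟩
      have e : Dd (x + 1, y) (p, q)
          = iabs (p - x - 1) + iabs (q - y) + ov00 (p - x - 1) (-(q - y)) := by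
        simp only [Dd]; rw [sgn2_succ, hy, hx, one_mul, neg_one_mul,
          show p - (x + 1) = p - x - 1 from by ring]
      rw [e, e0]; linarith [hk]
    · refine ⟨(x, y + 1), Or.inr ⟨rfl, by rw [unit_val, hx]⟩, ?_⟩
      have e : Dd (x, y + 1) (p, q)
          = iabs (p - x) + iabs (q - y - 1) + ov00 (-(p - x)) (q - y - 1) := by
        simp only [Dd]; rw [sgn2_succ, hy, hx, one_mul, neg_one_mul,
          show q - (y + 1) = q - y - 1 from by ring]
      rw [e, e0]; linarith [hk]
  · -- sgn2 y = 1, sgn2 x = -1 : A = p - x, B = y - q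
    have hab' : p - x ≠ 0 ∨ y - q ≠ 0 := by omega
    have e0 : Dd (x, y) (p, q) = iabs (p - x) + iabs (y - q) + ov00 (p - x) (y - q) := by
      simp only [Dd]; rw [hy, hx, one_mul, neg_one_mul, iabs_sub_comm q y,
        show -(q - y) = y - q from by ring]
    rcases key (p - x) (y - q) hab' with hk | hk
    · refine ⟨(x + 1, y), Or.inl ⟨rfl, by rw [unit_val, hy]⟩, ?_⟩
      have e : Dd (x + 1, y) (p, q)
          = iabs (p - x - 1) + iabs (y - q) + ov00 (p - x - 1) (-(y - q)) := by
        simp only [Dd]; rw [sgn2_succ, hy, hx, one_mul, neg_neg, one_mul, iabs_sub_comm q y,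
          show p - (x + 1) = p - x - 1 from by ring,
          show q - y = -(y - q) from by ring]
      rw [e, e0]; linarith [hk]
    · refine ⟨(x, y - 1), Or.inr ⟨rfl, by rw [unit_val, hx]; ring⟩, ?_⟩
      have e : Dd (x, y - 1) (p, q)
          = iabs (p - x) + iabs (y - q - 1) + ov00 (-(p - x)) (y - q - 1) := by
        simp only [Dd]; rw [sgn2_pred, hy, hx, neg_one_mul, neg_one_mul,
          show q - (y - 1) = -(y - q - 1) from by ring, iabs_neg, neg_neg]
      rw [e, e0]; linarith [hk]
  · -- sgn2 y = -1, sgn2 x = 1 : A = x - p, B = q - y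
    have hab' : x - p ≠ 0 ∨ q - y ≠ 0 := by omega
    have e0 : Dd (x, y) (p, q) = iabs (x - p) + iabs (q - y) + ov00 (x - p) (q - y) := by
      simp only [Dd]
      rw [hy, hx, one_mul, neg_one_mul, iabs_sub_comm p x,
        show -(p - x) = x - p from by ring]
    rcases key (x - p) (q - y) hab' with hk | hk
    · refine ⟨(x - 1, y), Or.inl ⟨rfl, by dsimp only; rw [unit_val, hy]; ring⟩, ?_⟩
      have e : Dd (x - 1, y) (p, q)
          = iabs (x - p - 1) + iabs (q - y) + ov00 (x - p - 1) (-(q - y)) := by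
        simp only [Dd]
        rw [sgn2_pred, hy, hx, neg_one_mul, neg_one_mul,
          show -(p - (x - 1)) = x - p - 1 from by ring,
          show p - (x - 1) = -(x - p - 1) from by ring, iabs_neg]
      rw [e, e0]; linarith [hk]
    · refine ⟨(x, y + 1), Or.inr ⟨rfl, by dsimp only; rw [unit_val, hx]⟩, ?_⟩
      have e : Dd (x, y + 1) (p, q)
          = iabs (x - p) + iabs (q - y - 1) + ov00 (-(x - p)) (q - y - 1) := by
        simp only [Dd]
        rw [sgn2_succ, hy, neg_neg, hx, one_mul, one_mul,
          show p - x = -(x - p) from by ring, iabs_neg,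
          show q - (y + 1) = q - y - 1 from by ring]
      rw [e, e0]; linarith [hk]
  · -- sgn2 y = -1, sgn2 x = -1 : A = x - p, B = y - q
    have hab' : x - p ≠ 0 ∨ y - q ≠ 0 := by omega
    have e0 : Dd (x, y) (p, q) = iabs (x - p) + iabs (y - q) + ov00 (x - p) (y - q) := by
      simp only [Dd]
      rw [hy, hx, neg_one_mul, neg_one_mul, iabs_sub_comm p x, iabs_sub_comm q y,
        show -(p - x) = x - p from by ring, show -(q - y) = y - q from by ring]
    rcases key (x - p) (y - q) hab' with hk | hk
    · refine ⟨(x - 1, y), Or.inl ⟨rfl, by dsimp only; rw [unit_val, hy]; ring⟩, ?_⟩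
      have e : Dd (x - 1, y) (p, q)
          = iabs (x - p - 1) + iabs (y - q) + ov00 (x - p - 1) (-(y - q)) := by
        simp only [Dd]
        rw [sgn2_pred, hy, hx, neg_neg, one_mul, neg_one_mul,
          show -(p - (x - 1)) = x - p - 1 from by ring,
          show p - (x - 1) = -(x - p - 1) from by ring, iabs_neg,
          iabs_sub_comm q y, show q - y = -(y - q) from by ring]
      rw [e, e0]; linarith [hk]
    · refine ⟨(x, y - 1), Or.inr ⟨rfl, by dsimp only; rw [unit_val, hx]; ring⟩, ?_⟩
      have e : Dd (x, y - 1) (p, q)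
          = iabs (x - p) + iabs (y - q - 1) + ov00 (-(x - p)) (y - q - 1) := by
        simp only [Dd]
        rw [sgn2_pred, hy, neg_neg, hx, one_mul, neg_one_mul,
          show -(q - (y - 1)) = y - q - 1 from by ring,
          show p - x = -(x - p) from by ring, iabs_neg,
          show q - (y - 1) = -(y - q - 1) from by ring, iabs_neg]
      rw [e, e0]; linarith [hk]

lemma build (n : ℕ) : ∀ u v : ℤ × ℤ, Dd u v ≤ n →
    ∃ (L : ℕ) (w : ℕ → ℤ × ℤ),
      w 0 = u ∧ w L = v ∧ (∀ i < L, altGridStep (w i) (w (i + 1))) ∧ L ≤ n := by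
  induction n with
  | zero =>
    intro u v h
    have huv : u = v := Dd_eq_zero (by exact_mod_cast h)
    exact ⟨0, fun _ => u, rfl, by rw [huv], by intro i hi; omega, le_refl 0⟩
  | succ n ih =>
    intro u v h
    by_cases huv : u = v
    · exact ⟨0, fun _ => u, rfl, by rw [huv], by intro i hi; omega, by omega⟩
    · obtain ⟨u', hstep, hlt⟩ := descent u v huv
      have h' : Dd u' v ≤ n := by
        have hn : Dd u v ≤ (n : ℤ) + 1 := by exact_mod_cast h
        omega
      obtain ⟨L, w, hw0, hwL, hws, hLn⟩ := ih u' v h'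
      refine ⟨L + 1, fun i => if i = 0 then u else w (i - 1), by simp, ?_, ?_, by omega⟩
      · simp only [Nat.succ_ne_zero, if_false]
        simpa using hwL
      · intro i hi
        match i with
        | 0 =>
          simp only [if_pos rfl, if_neg one_ne_zero]
          simpa [hw0] using hstep
        | (j + 1) =>
          simp only [if_neg (Nat.succ_ne_zero j), Nat.add_sub_cancel]
          have : j < L := by omega
          simpa using hws j this

lemma iabs_eq_abs (n : ℤ) : iabs n = |n| := by
  unfold iabs
  split_ifs with h
  · rw [abs_of_nonneg h]
  · rw [abs_of_neg (by omega)]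

/-- For any two vertices `u v : ℤ × ℤ` there is a directed path from `u` to `v`
under the alternating grid orientation of length at most the Manhattan distance
plus `5`. -/
theorem altGrid_directed_dist_le_manhattan_add_five (u v : ℤ × ℤ) :
    ∃ (L : ℕ) (w : ℕ → ℤ × ℤ),
      w 0 = u ∧ w L = v ∧ (∀ i < L, altGridStep (w i) (w (i + 1))) ∧
      (L : ℤ) ≤ |v.1 - u.1| + |v.2 - u.2| + 5 := by
  have hDn := Dd_nonneg u v
  obtain ⟨L, w, hw0, hwL, hws, hL⟩ := build (Dd u v).toNat u v (by omega)
  refine ⟨L, w, hw0, hwL, hws, ?_⟩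
  have h1 : (L : ℤ) ≤ Dd u v := by omega
  have h2 : Dd u v ≤ |v.1 - u.1| + |v.2 - u.2| + 5 := by
    have := ov00_le4 (sgn2 u.2 * (v.1 - u.1)) (sgn2 u.1 * (v.2 - u.2))
    unfold Dd
    rw [← iabs_eq_abs, ← iabs_eq_abs]
    omega
  omega
end
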